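/- Let Â ⊆ B̂ be Boolean algebras with |Â| < 𝔠 ≤ |B̂| (𝔠 being the cardinality of the continuum), let φ : P(ℕ) → B̂ be a submorphism from the power set algebra of ℕ such that φ({n}) ∈ Â for every n ∈ ℕ, let I be an index set with |I| < 𝔠, and suppose that for every i ∈ I, X_i, Y_i ⊆ Â are orthogonal subsets which are not separated in Â. Then there exists an infinite set τ ⊆ ℕ such that for every υ ⊆ τ and every i ∈ I, the sets X_i and Y_i remain not separated in the subalgebra Â⟨φ(υ)⟩ of B̂ generated by Â together with φ(υ). -/

import Mathlib

open Cardinal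

/-- A subset of a Boolean algebra which is a subalgebra: it contains `⊥` and `⊤` and is
closed under `⊔`, `⊓` and complementation. -/
def IsBASubalgebra {B : Type*} [BooleanAlgebra B] (A : Set B) : Prop :=
  ⊥ ∈ A ∧ ⊤ ∈ A ∧ (∀ x ∈ A, ∀ y ∈ A, x ⊔ y ∈ A) ∧ (∀ x ∈ A, ∀ y ∈ A, x ⊓ y ∈ A) ∧
    ∀ x ∈ A, xᶜ ∈ A

/-- Membership in the subalgebra of `B` generated by a set `S`. -/
inductive BAGen {B : Type*} [BooleanAlgebra B] (S : Set B) : B → Prop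
  | of {a : B} : a ∈ S → BAGen S a
  | bot : BAGen S ⊥
  | top : BAGen S ⊤
  | sup {a b : B} : BAGen S a → BAGen S b → BAGen S (a ⊔ b)
  | inf {a b : B} : BAGen S a → BAGen S b → BAGen S (a ⊓ b)
  | compl {a : B} : BAGen S a → BAGen S aᶜ

/-- Two subsets `X`, `Y` of a Boolean algebra `B` are separated inside a subset `A ⊆ B` if
some `c ∈ A` satisfies `x ≤ c` for all `x ∈ X` and `y ⊓ c = ⊥` for all `y ∈ Y`. -/
def SeparatedIn {B : Type*} [BooleanAlgebra B] (A : Set B) (X Y : Set B) : Prop :=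
  ∃ c ∈ A, (∀ x ∈ X, x ≤ c) ∧ ∀ y ∈ Y, y ⊓ c = ⊥

namespace KeepNonsepAux

variable {B : Type*} [BooleanAlgebra B]

lemma eq_of_parts {u x y : B} (h1 : x ⊓ u = y ⊓ u) (h2 : x ⊓ uᶜ = y ⊓ uᶜ) : x = y := by
  have hx : x = x ⊓ u ⊔ x ⊓ uᶜ := by rw [← inf_sup_left]; simp
  have hy : y = y ⊓ u ⊔ y ⊓ uᶜ := by rw [← inf_sup_left]; simp
  rw [hx, hy, h1, h2]

lemma part_u (a b u : B) : ((a ⊓ u) ⊔ (b ⊓ uᶜ)) ⊓ u = a ⊓ u := by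
  rw [inf_sup_right]; simp [inf_assoc]

lemma part_uc (a b u : B) : ((a ⊓ u) ⊔ (b ⊓ uᶜ)) ⊓ uᶜ = b ⊓ uᶜ := by
  rw [inf_sup_right]; simp [inf_assoc]

lemma compl_part (x u : B) : xᶜ ⊓ u = (x ⊓ u)ᶜ ⊓ u := by
  rw [compl_inf, inf_sup_right]; simp

lemma normal_form {A : Set B} (hA : IsBASubalgebra A) (u : B) {c : B}
    (hc : BAGen (A ∪ {u}) c) : ∃ a ∈ A, ∃ b ∈ A, c = (a ⊓ u) ⊔ (b ⊓ uᶜ) := by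
  obtain ⟨hbot, htop, hsup, hinf, hcompl⟩ := hA
  induction hc with
  | @of c h =>
    rcases h with h | h
    · exact ⟨c, h, c, h, by rw [← inf_sup_left]; simp⟩
    · simp only [Set.mem_singleton_iff] at h
      subst h
      exact ⟨⊤, htop, ⊥, hbot, by simp⟩
  | bot => exact ⟨⊥, hbot, ⊥, hbot, by simp⟩
  | top => exact ⟨⊤, htop, ⊤, htop, by rw [← inf_sup_left]; simp⟩
  | sup h1 h2 ih1 ih2 =>
    obtain ⟨a1, ha1, b1, hb1, rfl⟩ := ih1
    obtain ⟨a2, ha2, b2, hb2, rfl⟩ := ih2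
    refine ⟨a1 ⊔ a2, hsup _ ha1 _ ha2, b1 ⊔ b2, hsup _ hb1 _ hb2, ?_⟩
    apply eq_of_parts (u := u)
    · rw [inf_sup_right, part_u, part_u, part_u, inf_sup_right]
    · rw [inf_sup_right, part_uc, part_uc, part_uc, inf_sup_right]
  | inf h1 h2 ih1 ih2 =>
    obtain ⟨a1, ha1, b1, hb1, rfl⟩ := ih1
    obtain ⟨a2, ha2, b2, hb2, rfl⟩ := ih2
    refine ⟨a1 ⊓ a2, hinf _ ha1 _ ha2, b1 ⊓ b2, hinf _ hb1 _ hb2, ?_⟩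
    apply eq_of_parts (u := u)
    · rw [part_u, inf_inf_distrib_right, part_u, part_u, ← inf_inf_distrib_right]
    · rw [part_uc, inf_inf_distrib_right, part_uc, part_uc, ← inf_inf_distrib_right]
  | compl h ih =>
    obtain ⟨a, ha, b, hb, rfl⟩ := ih
    refine ⟨aᶜ, hcompl _ ha, bᶜ, hcompl _ hb, ?_⟩
    apply eq_of_parts (u := u)
    · rw [part_u, compl_part, part_u, ← compl_part]
    · have h1 : ∀ x : B, xᶜ ⊓ uᶜ = (x ⊓ uᶜ)ᶜ ⊓ uᶜ := fun x => compl_part x uᶜ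
      rw [part_uc, h1, part_uc, ← h1]

/-- The four conditions saying that `(a ⊓ u) ⊔ (b ⊓ uᶜ)` separates `X` from `Y`. -/
def Sep (X Y : Set B) (a b u : B) : Prop :=
  (∀ x ∈ X, x ⊓ u ≤ a) ∧ (∀ x ∈ X, x ⊓ uᶜ ≤ b) ∧
  (∀ y ∈ Y, y ⊓ (a ⊓ u) = ⊥) ∧ (∀ y ∈ Y, y ⊓ (b ⊓ uᶜ) = ⊥)

lemma sep_of_separatedIn {A : Set B} (hA : IsBASubalgebra A) {X Y : Set B} {u : B}
    (h : SeparatedIn {b : B | BAGen (A ∪ {u}) b} X Y) :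
    ∃ a ∈ A, ∃ b ∈ A, Sep X Y a b u := by
  obtain ⟨c, hc, hXc, hYc⟩ := h
  obtain ⟨a, ha, b, hb, rfl⟩ := normal_form hA u hc
  refine ⟨a, ha, b, hb, ?_, ?_, ?_, ?_⟩
  · intro x hx
    calc x ⊓ u ≤ ((a ⊓ u) ⊔ (b ⊓ uᶜ)) ⊓ u := inf_le_inf_right _ (hXc x hx)
      _ = a ⊓ u := part_u ..
      _ ≤ a := inf_le_left
  · intro x hx
    calc x ⊓ uᶜ ≤ ((a ⊓ u) ⊔ (b ⊓ uᶜ)) ⊓ uᶜ := inf_le_inf_right _ (hXc x hx)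
      _ = b ⊓ uᶜ := part_uc ..
      _ ≤ b := inf_le_left
  · intro y hy
    have h1 : y ⊓ (a ⊓ u) ≤ y ⊓ ((a ⊓ u) ⊔ (b ⊓ uᶜ)) := inf_le_inf_left _ le_sup_left
    rw [hYc y hy] at h1
    exact le_bot_iff.mp h1
  · intro y hy
    have h1 : y ⊓ (b ⊓ uᶜ) ≤ y ⊓ ((a ⊓ u) ⊔ (b ⊓ uᶜ)) := inf_le_inf_left _ le_sup_right
    rw [hYc y hy] at h1
    exact le_bot_iff.mp h1

lemma separatedIn_of_sep {A : Set B} (hA : IsBASubalgebra A) {X Y : Set B} {a b u : B}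
    (ha : a ∈ A) (hb : b ∈ A) (hu : u ∈ A) (h : Sep X Y a b u) :
    SeparatedIn A X Y := by
  obtain ⟨hbot, htop, hsupA, hinfA, hcomplA⟩ := hA
  obtain ⟨h1, h2, h3, h4⟩ := h
  refine ⟨(a ⊓ u) ⊔ (b ⊓ uᶜ),
    hsupA _ (hinfA _ ha _ hu) _ (hinfA _ hb _ (hcomplA _ hu)), ?_, ?_⟩
  · intro x hx
    have hx2 : x = x ⊓ u ⊔ x ⊓ uᶜ := by rw [← inf_sup_left]; simp
    rw [hx2]
    exact sup_le_sup (le_inf (h1 x hx) inf_le_right) (le_inf (h2 x hx) inf_le_right)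
  · intro y hy
    rw [inf_sup_left, h3 y hy, h4 y hy, sup_idem]

lemma sep_inf {X Y : Set B} {a b u v : B} (hu : Sep X Y a b u) (hv : Sep X Y a b v) :
    Sep X Y a b (u ⊓ v) := by
  obtain ⟨h1, h2, h3, h4⟩ := hu
  obtain ⟨k1, k2, k3, k4⟩ := hv
  refine ⟨?_, ?_, ?_, ?_⟩
  · intro x hx
    exact le_trans (inf_le_inf_left x inf_le_left) (h1 x hx)
  · intro x hx
    rw [compl_inf, inf_sup_left]
    exact sup_le (h2 x hx) (k2 x hx)
  · intro y hy
    have : y ⊓ (a ⊓ (u ⊓ v)) ≤ y ⊓ (a ⊓ u) :=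
      inf_le_inf_left y (inf_le_inf_left a inf_le_left)
    rw [h3 y hy] at this
    exact le_bot_iff.mp this
  · intro y hy
    rw [compl_inf, inf_sup_left, inf_sup_left, h4 y hy, k4 y hy, sup_idem]

end KeepNonsepAux

section ADFamily

/-- The initial segment of length `n` of `f : ℕ → Bool`, as a list. -/
def adSeg (f : ℕ → Bool) (n : ℕ) : List Bool := List.ofFn (fun k : Fin n => f k)

/-- The almost disjoint family member associated to `f : ℕ → Bool`. -/
def adTau (f : ℕ → Bool) : Set ℕ := Set.range (fun n => Encodable.encode (adSeg f n))

lemma adSeg_injective (f : ℕ → Bool) :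
    Function.Injective (fun n => Encodable.encode (adSeg f n)) := by
  intro m n h
  have h2 : adSeg f m = adSeg f n := Encodable.encode_injective h
  have h3 := congrArg List.length h2
  simpa [adSeg] using h3

lemma adTau_infinite (f : ℕ → Bool) : (adTau f).Infinite :=
  Set.infinite_range_of_injective (adSeg_injective f)

lemma adTau_ad {f g : ℕ → Bool} (h : f ≠ g) : (adTau f ∩ adTau g).Finite := by
  have hex : ∃ n, f n ≠ g n := Function.ne_iff.mp h
  set n₀ := Nat.find hex with hn₀
  apply Set.Finite.subset
    (Set.Finite.image (fun n => Encodable.encode (adSeg f n)) (Set.finite_le_nat n₀))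
  rintro m ⟨⟨n, hn⟩, ⟨n', hn'⟩⟩
  have hseg : adSeg f n = adSeg g n' := Encodable.encode_injective (hn.trans hn'.symm)
  have hlen : n = n' := by simpa [adSeg] using congrArg List.length hseg
  subst hlen
  have hvals : ∀ k : Fin n, f k = g k := by
    intro k
    have := congrArg (fun l => l.getD k false) hseg
    simpa [adSeg, List.getD_eq_getElem?_getD, List.getElem?_ofFn, k.2] using this
  have hle : n ≤ n₀ := by
    by_contra hlt
    push_neg at hlt
    exact Nat.find_spec hex (hvals ⟨n₀, hlt⟩)
  exact ⟨n, hle, hn⟩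

end ADFamily

universe u v w


lemma not_inj_small {α : Type u} {β : Type v} {γ : Type w}
    (hα : #α < 𝔠) (hβ : #β < 𝔠) (hγ : #γ < 𝔠) (F : (ℕ → Bool) → α × β × γ) :
    ¬ Function.Injective F := by
  intro hinj
  have hinj' : Function.Injective
      (fun f : ULift.{max u v w} (ℕ → Bool) =>
        ((ULift.up (F f.down).1, ULift.up (F f.down).2.1, ULift.up (F f.down).2.2) :
          ULift.{max u v w} α × ULift.{max u v w} β × ULift.{max u v w} γ)) := by
    intro f g h
    simp only [Prod.mk.injEq, ULift.up_inj] at h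
    have : F f.down = F g.down := by
      obtain ⟨h1, h2, h3⟩ := h
      exact Prod.ext h1 (Prod.ext h2 h3)
    exact ULift.ext _ _ (hinj this)
  have hle := mk_le_of_injective hinj'
  have hsrc : #(ULift.{max u v w} (ℕ → Bool)) = 𝔠 := by
    rw [mk_uLift]
    have h1 : #(ℕ → Bool) = 𝔠 := by
      rw [← two_power_aleph0]
      simp [mk_arrow]
    rw [h1, lift_continuum]
  have htgt : #(ULift.{max u v w} α × ULift.{max u v w} β × ULift.{max u v w} γ) < 𝔠 := by
    have h0 : ℵ₀ ≤ (𝔠 : Cardinal.{max u v w}) := aleph0_le_continuum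
    have hα' : #(ULift.{max u v w} α) < 𝔠 := by
      rw [mk_uLift]
      exact lift_lt_continuum.mpr hα
    have hβ' : #(ULift.{max u v w} β) < 𝔠 := by
      rw [mk_uLift]
      exact lift_lt_continuum.mpr hβ
    have hγ' : #(ULift.{max u v w} γ) < 𝔠 := by
      rw [mk_uLift]
      exact lift_lt_continuum.mpr hγ
    calc #(ULift.{max u v w} α × ULift.{max u v w} β × ULift.{max u v w} γ)
        = #(ULift.{max u v w} α) * #(ULift.{max u v w} β × ULift.{max u v w} γ) := by
          rw [mk_prod]; simp
      _ = #(ULift.{max u v w} α) * (#(ULift.{max u v w} β) * #(ULift.{max u v w} γ)) := by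
          rw [mk_prod]; simp
      _ < 𝔠 := mul_lt_of_lt h0 hα' (mul_lt_of_lt h0 hβ' hγ')
  rw [hsrc] at hle
  exact absurd (lt_of_le_of_lt hle htgt) (lt_irrefl _)

open KeepNonsepAux in
theorem keep_nonseparated
    (B : Type*) [BooleanAlgebra B] (A : Set B) (hA : IsBASubalgebra A)
    (hcardA : #A < 𝔠) (hcardB : 𝔠 ≤ #B)
    (φ : Set ℕ → B)
    (hφbot : φ ∅ = ⊥)
    (hφinf : ∀ s t : Set ℕ, φ (s ∩ t) = φ s ⊓ φ t)
    (hφsup : ∀ s t : Set ℕ, φ (s ∪ t) = φ s ⊔ φ t)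
    (hφA : ∀ n : ℕ, φ {n} ∈ A)
    (I : Type*) (hcardI : #I < 𝔠)
    (X Y : I → Set B) (hX : ∀ i, X i ⊆ A) (hY : ∀ i, Y i ⊆ A)
    (horth : ∀ i, ∀ x ∈ X i, ∀ y ∈ Y i, x ⊓ y = ⊥)
    (hnonsep : ∀ i, ¬ SeparatedIn A (X i) (Y i)) :
    ∃ τ : Set ℕ, τ.Infinite ∧ ∀ υ ⊆ τ, ∀ i,
      ¬ SeparatedIn {b : B | BAGen (A ∪ {φ υ}) b} (X i) (Y i) := by
  -- φ of a finite set lies in A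
  have hfin : ∀ s : Set ℕ, s.Finite → φ s ∈ A := by
    intro s hs
    refine Set.Finite.induction_on s hs ?_ ?_
    · rw [hφbot]; exact hA.1
    · intro n t _ _ ih
      have h : insert n t = {n} ∪ t := rfl
      rw [h, hφsup]
      exact hA.2.2.1 _ (hφA n) _ ih
  by_contra hcon
  push_neg at hcon
  -- for every f : ℕ → Bool choose a witness of separation over adTau f
  have H : ∀ f : ℕ → Bool, ∃ (υ : Set ℕ) (i : I) (a : B) (b : B),
      υ ⊆ adTau f ∧ a ∈ A ∧ b ∈ A ∧ Sep (X i) (Y i) a b (φ υ) := by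
    intro f
    obtain ⟨υ, hυ, i, hi⟩ := hcon (adTau f) (adTau_infinite f)
    obtain ⟨a, ha, b, hb, hsep⟩ := sep_of_separatedIn hA hi
    exact ⟨υ, i, a, b, hυ, ha, hb, hsep⟩
  choose υF iF aF bF hsub haF hbF hSep using H
  -- the coding map into a set of cardinality `< 𝔠` is not injective
  have hF := not_inj_small hcardA hcardA hcardI
    (fun f : ℕ → Bool => ((⟨aF f, haF f⟩, ⟨bF f, hbF f⟩, iF f) : ↥A × ↥A × I))
  rw [Function.not_injective_iff] at hF
  obtain ⟨f, g, heq, hne⟩ := hF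
  simp only [Prod.mk.injEq, Subtype.mk.injEq] at heq
  obtain ⟨hab, hbb, hib⟩ := heq
  -- the intersection of the two chosen sets is finite
  have hfinint : (υF f ∩ υF g).Finite :=
    Set.Finite.subset (adTau_ad hne) (Set.inter_subset_inter (hsub f) (hsub g))
  have hsep1 : Sep (X (iF f)) (Y (iF f)) (aF f) (bF f) (φ (υF f)) := hSep f
  have hsep2 : Sep (X (iF f)) (Y (iF f)) (aF f) (bF f) (φ (υF g)) := by
    rw [hab, hbb, hib]
    exact hSep g
  have hsep3 : Sep (X (iF f)) (Y (iF f)) (aF f) (bF f) (φ (υF f ∩ υF g)) := by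
    rw [hφinf]
    exact sep_inf hsep1 hsep2
  exact hnonsep (iF f)
    (separatedIn_of_sep hA (haF f) (hbF f) (hfin _ hfinint) hsep3)
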